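/- Let M1 and M_C be random variables with values in [0,1], A1 an event, and e1 ≥ 0. If MCE(M1, A1) ≤ e1 and the conditional independence A1 ⟂ M_C | M1 holds, then |P(A1 | σ(M_C)) − E[M1 | σ(M_C)]| ≤ e1 almost surely; in particular E[M1 | σ(M_C)] − e1 ≤ P(A1 | σ(M_C)) ≤ E[M1 | σ(M_C)] + e1 almost surely. -/

import Mathlib

open MeasureTheory ProbabilityTheory
open scoped ENNReal

/-- The sigma-algebra generated by a random variable. -/
def sigGen {Ω α : Type*} [MeasurableSpace α] (M : Ω → α) : MeasurableSpace Ω :=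
  MeasurableSpace.comap M inferInstance

/-- Conditional probability of an event given a sub-sigma-algebra, as a random variable:
`P(A | 𝒢) = E[1_A | 𝒢]`. -/
noncomputable def cprob {Ω : Type*} [MeasurableSpace Ω] (μ : Measure Ω)
    (m : MeasurableSpace Ω) (A : Set Ω) : Ω → ℝ :=
  μ[A.indicator (fun _ => (1 : ℝ)) | m]


/-- Lemma 4.1 (Conditional Assumption Bounds), per-monitor: if `MCE(M1, A1) ≤ e1` and
`A1 ⟂ M_C | M1`, then `|P(A1 | σ(M_C)) − E[M1 | σ(M_C)]| ≤ e1` a.s.; in particular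
`E[M1 | σ(M_C)] − e1 ≤ P(A1 | σ(M_C)) ≤ E[M1 | σ(M_C)] + e1` a.s. -/
theorem conditional_assumption_bound
    {Ω : Type*} [MeasurableSpace Ω] (μ : Measure Ω) [IsProbabilityMeasure μ]
    (M1 MC : Ω → ℝ) (hM1 : Measurable M1) (hMC : Measurable MC)
    (hM1r : ∀ ω, M1 ω ∈ Set.Icc (0 : ℝ) 1) (hMCr : ∀ ω, MC ω ∈ Set.Icc (0 : ℝ) 1)
    (A1 : Set Ω) (hA1 : MeasurableSet A1) (e1 : ℝ) (he1 : 0 ≤ e1)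
    (hMCE : ∀ᵐ ω ∂μ, |cprob μ (sigGen M1) A1 ω - M1 ω| ≤ e1)
    (hCI : cprob μ (sigGen (fun ω => (M1 ω, MC ω))) A1 =ᵐ[μ] cprob μ (sigGen M1) A1) :
    (∀ᵐ ω ∂μ, |cprob μ (sigGen MC) A1 ω - (μ[M1 | sigGen MC]) ω| ≤ e1) ∧
    (∀ᵐ ω ∂μ, (μ[M1 | sigGen MC]) ω - e1 ≤ cprob μ (sigGen MC) A1 ω ∧
      cprob μ (sigGen MC) A1 ω ≤ (μ[M1 | sigGen MC]) ω + e1) := by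
  classical
  have hm : sigGen MC ≤ ‹MeasurableSpace Ω› := hMC.comap_le
  have hmp : sigGen (fun ω => (M1 ω, MC ω)) ≤ ‹MeasurableSpace Ω› :=
    (hM1.prodMk hMC).comap_le
  have hle : sigGen MC ≤ sigGen (fun ω => (M1 ω, MC ω)) := by
    have h : MC = (fun p : ℝ × ℝ => p.2) ∘ (fun ω => (M1 ω, MC ω)) := rfl
    rw [sigGen, sigGen, h, ← MeasurableSpace.comap_comp]
    exact MeasurableSpace.comap_mono measurable_snd.comap_le
  have hM1int : Integrable M1 μ := by
    refine ⟨hM1.aestronglyMeasurable, HasFiniteIntegral.of_bounded (C := 1) ?_⟩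
    filter_upwards with ω
    have h := hM1r ω
    rw [Real.norm_eq_abs, abs_le]
    exact ⟨by linarith [h.1], h.2⟩
  have htower : cprob μ (sigGen MC) A1
      =ᵐ[μ] μ[cprob μ (sigGen (fun ω => (M1 ω, MC ω))) A1 | sigGen MC] :=
    (condExp_condExp_of_le hle hmp).symm
  have hci : μ[cprob μ (sigGen (fun ω => (M1 ω, MC ω))) A1 | sigGen MC]
      =ᵐ[μ] μ[cprob μ (sigGen M1) A1 | sigGen MC] :=
    condExp_congr_ae hCI
  have hsub : μ[cprob μ (sigGen M1) A1 | sigGen MC] - μ[M1 | sigGen MC]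
      =ᵐ[μ] μ[cprob μ (sigGen M1) A1 - M1 | sigGen MC] :=
    (condExp_sub integrable_condExp hM1int (sigGen MC)).symm
  have hbdd : ∀ᵐ ω ∂μ,
      |(μ[cprob μ (sigGen M1) A1 - M1 | sigGen MC]) ω| ≤ ((⟨e1, he1⟩ : NNReal) : ℝ) := by
    refine ae_bdd_condExp_of_ae_bdd ?_
    filter_upwards [hMCE] with ω h
    exact h
  have hmain : ∀ᵐ ω ∂μ, |cprob μ (sigGen MC) A1 ω - (μ[M1 | sigGen MC]) ω| ≤ e1 := by
    filter_upwards [htower, hci, hsub, hbdd] with ω h1 h2 h3 h4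
    have hkey : cprob μ (sigGen MC) A1 ω - (μ[M1 | sigGen MC]) ω
        = (μ[cprob μ (sigGen M1) A1 - M1 | sigGen MC]) ω := by
      rw [h1, h2, ← h3]; simp [Pi.sub_apply]
    rw [hkey]
    simpa using h4
  refine ⟨hmain, ?_⟩
  filter_upwards [hmain] with ω h
  rw [abs_le] at h
  constructor <;> linarith [h.1, h.2]
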